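/- Assume λ_A > 0 and max(r_u − μ_u, r_v − μ_v) > 0, and let (u*, v*) with u*, v* > 0 be the stationary state of the ODE system (S). Define F_u(u) := u − u* − u* ln(u/u*), F_v(v) := v − v* − v* ln(v/v*), and F^K(u, v) := F_u(u) + K F_v(v). Then there exists K > 0 such that for every differentiable solution (u(t), v(t)) of (S) with u(t) > 0 and v(t) > 0, the function t ↦ F^K(u(t), v(t)) has nonpositive derivative for all t, and the derivative is strictly negative at every time t at which (u(t), v(t)) ≠ (u*, v*). -/

import Mathlib

/-- Core algebraic inequality: with a suitably chosen weight `K`, the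
dissipation polynomial is nonnegative, and positive away from equilibrium. -/
private lemma keyW (κu κv μu μv us vs K u v : ℝ)
    (hκu : 0 < κu) (hκv : 0 < κv) (hμu : 0 < μu) (hμv : 0 < μv)
    (hus : 0 < us) (hvs : 0 < vs) (hu : 0 < u) (hv : 0 < v) (hK : 0 < K)
    (hcase : us*vs*(κu + K*κv) - μv*vs - K*μu*us = 0 ∨
      (K*κv = κu ∧ 0 ≤ us*vs*(κu + K*κv) - μv*vs - K*μu*us) ∨
      (K*μu*us = μv*vs ∧ us*vs*(κu + K*κv) - μv*vs - K*μu*us ≤ 0)) :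
    0 ≤ κu*us*vs*(u*v)*(u - us)^2 + K*κv*us*vs*(u*v)*(v - vs)^2
        + μv*vs*v^2*(u - us)^2 + K*μu*us*u^2*(v - vs)^2
        + (us*vs*(κu + K*κv) - μv*vs - K*μu*us)*((u*v)*((u - us)*(v - vs)))
      ∧ (¬(u = us ∧ v = vs) →
        0 < κu*us*vs*(u*v)*(u - us)^2 + K*κv*us*vs*(u*v)*(v - vs)^2
        + μv*vs*v^2*(u - us)^2 + K*μu*us*u^2*(v - vs)^2
        + (us*vs*(κu + K*κv) - μv*vs - K*μu*us)*((u*v)*((u - us)*(v - vs)))) := by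
  have h1 : 0 ≤ κu*us*vs*(u*v)*(u - us)^2 := by positivity
  have h2 : 0 ≤ K*κv*us*vs*(u*v)*(v - vs)^2 := by positivity
  have h3 : 0 ≤ μv*vs*v^2*(u - us)^2 := by positivity
  have h4 : 0 ≤ K*μu*us*u^2*(v - vs)^2 := by positivity
  have hstrict34 : ¬(u = us ∧ v = vs) →
      0 < μv*vs*v^2*(u - us)^2 + K*μu*us*u^2*(v - vs)^2 := by
    intro h
    rcases not_and_or.1 h with h | h
    · have hne : u - us ≠ 0 := sub_ne_zero.mpr h
      have hsq : 0 < (u - us)^2 := lt_of_le_of_ne (sq_nonneg _) (Ne.symm (pow_ne_zero 2 hne))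
      have : 0 < μv*vs*v^2*(u - us)^2 := by positivity
      linarith
    · have hne : v - vs ≠ 0 := sub_ne_zero.mpr h
      have hsq : 0 < (v - vs)^2 := lt_of_le_of_ne (sq_nonneg _) (Ne.symm (pow_ne_zero 2 hne))
      have : 0 < K*μu*us*u^2*(v - vs)^2 := by positivity
      linarith
  rcases hcase with hE | ⟨hKκ, hE⟩ | ⟨hc, hE⟩
  · -- E = 0
    rw [hE]
    constructor
    · nlinarith [h1, h2, h3, h4]
    · intro h
      have := hstrict34 h
      nlinarith [h1, h2]
  · -- K*κv = κu and 0 ≤ E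
    rcases le_or_gt 0 ((u - us)*(v - vs)) with hab | hab
    · have h5 : 0 ≤ (us*vs*(κu + K*κv) - μv*vs - K*μu*us)*((u*v)*((u - us)*(v - vs))) :=
        mul_nonneg hE (mul_nonneg (mul_pos hu hv).le hab)
      exact ⟨by linarith, fun h => by have := hstrict34 h; linarith⟩
    · have e1 : κu*us*vs*(u*v)*(u - us)^2 + K*κv*us*vs*(u*v)*(v - vs)^2
          + (us*vs*(κu + K*κv) - μv*vs - K*μu*us)*((u*v)*((u - us)*(v - vs)))
          = κu*us*vs*(u*v)*((u - us) + (v - vs))^2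
            + (μv*vs + K*μu*us)*((u*v)*(-((u - us)*(v - vs)))) := by
        linear_combination (us*vs*(u*v)*((v - vs)^2 + (u - us)*(v - vs))) * hKκ
      have h6 : 0 < (μv*vs + K*μu*us)*((u*v)*(-((u - us)*(v - vs)))) := by
        have hpos : 0 < -((u - us)*(v - vs)) := by linarith
        have : 0 < μv*vs + K*μu*us := by positivity
        exact mul_pos this (mul_pos (mul_pos hu hv) hpos)
      have h7 : 0 ≤ κu*us*vs*(u*v)*((u - us) + (v - vs))^2 := by positivity
      constructor
      · linarith [e1, h3, h4, h6, h7]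
      · intro _
        linarith [e1, h3, h4, h6, h7]
  · -- K*μu*us = μv*vs and E ≤ 0
    rcases le_or_gt ((u - us)*(v - vs)) 0 with hab | hab
    · have hprod : (u*v)*((u - us)*(v - vs)) ≤ 0 :=
        mul_nonpos_of_nonneg_of_nonpos (mul_pos hu hv).le hab
      have h5 : 0 ≤ (us*vs*(κu + K*κv) - μv*vs - K*μu*us)*((u*v)*((u - us)*(v - vs))) := by
        nlinarith [mul_nonneg (neg_nonneg.2 hE) (neg_nonneg.2 hprod)]
      exact ⟨by linarith, fun h => by have := hstrict34 h; linarith⟩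
    · have e2 : μv*vs*v^2*(u - us)^2 + K*μu*us*u^2*(v - vs)^2
          + (us*vs*(κu + K*κv) - μv*vs - K*μu*us)*((u*v)*((u - us)*(v - vs)))
          = μv*vs*(v*(u - us) - u*(v - vs))^2
            + (us*vs*(κu + K*κv))*((u*v)*((u - us)*(v - vs))) := by
        linear_combination (u^2*(v - vs)^2 - u*v*((u - us)*(v - vs))) * hc
      have h6 : 0 < (us*vs*(κu + K*κv))*((u*v)*((u - us)*(v - vs))) := by
        have : 0 < us*vs*(κu + K*κv) := by positivity
        exact mul_pos this (mul_pos (mul_pos hu hv) hab)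
      have h7 : 0 ≤ μv*vs*(v*(u - us) - u*(v - vs))^2 := by positivity
      constructor
      · linarith [e2, h1, h2, h6, h7]
      · intro _
        linarith [e2, h1, h2, h6, h7]

/-- Value of the dissipation of `F^K` at a point `(x, y)` is nonpositive,
and negative away from equilibrium. -/
private lemma val_bound (ru rv κu κv μu μv us vs K x y : ℝ)
    (hκu : 0 < κu) (hκv : 0 < κv) (hμu : 0 < μu) (hμv : 0 < μv)
    (hus : 0 < us) (hvs : 0 < vs) (hx : 0 < x) (hy : 0 < y) (hK : 0 < K)
    (hstat1 : (ru - κu * (us + vs)) * us + μv * vs - μu * us = 0)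
    (hstat2 : (rv - κv * (us + vs)) * vs + μu * us - μv * vs = 0)
    (hcase : us*vs*(κu + K*κv) - μv*vs - K*μu*us = 0 ∨
      (K*κv = κu ∧ 0 ≤ us*vs*(κu + K*κv) - μv*vs - K*μu*us) ∨
      (K*μu*us = μv*vs ∧ us*vs*(κu + K*κv) - μv*vs - K*μu*us ≤ 0)) :
    (((ru - κu*(x+y))*x + μv*y - μu*x) - us*(((ru - κu*(x+y))*x + μv*y - μu*x)/x))
      + K*(((rv - κv*(x+y))*y + μu*x - μv*y) - vs*(((rv - κv*(x+y))*y + μu*x - μv*y)/y)) ≤ 0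
    ∧ (¬(x = us ∧ y = vs) →
      (((ru - κu*(x+y))*x + μv*y - μu*x) - us*(((ru - κu*(x+y))*x + μv*y - μu*x)/x))
      + K*(((rv - κv*(x+y))*y + μu*x - μv*y) - vs*(((rv - κv*(x+y))*y + μu*x - μv*y)/y)) < 0) := by
  obtain ⟨hk0, hk1⟩ := keyW κu κv μu μv us vs K x y hκu hκv hμu hμv hus hvs hx hy hK hcase
  have hid : us*vs*(y*(x - us)*((ru - κu*(x+y))*x + μv*y - μu*x)
        + K*(x*(y - vs)*((rv - κv*(x+y))*y + μu*x - μv*y)))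
      = -(κu*us*vs*(x*y)*(x - us)^2 + K*κv*us*vs*(x*y)*(y - vs)^2
        + μv*vs*y^2*(x - us)^2 + K*μu*us*x^2*(y - vs)^2
        + (us*vs*(κu + K*κv) - μv*vs - K*μu*us)*((x*y)*((x - us)*(y - vs)))) := by
    linear_combination (vs*y*(x - us)*x) * hstat1 + (K*us*x*(y - vs)*y) * hstat2
  have hnum_le : y*(x - us)*((ru - κu*(x+y))*x + μv*y - μu*x)
      + K*(x*(y - vs)*((rv - κv*(x+y))*y + μu*x - μv*y)) ≤ 0 := by
    rcases le_or_gt (y*(x - us)*((ru - κu*(x+y))*x + μv*y - μu*x)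
      + K*(x*(y - vs)*((rv - κv*(x+y))*y + μu*x - μv*y))) 0 with h | h
    · exact h
    · exfalso
      have hm := mul_pos (mul_pos hus hvs) h
      rw [hid] at hm
      linarith
  have hval : (((ru - κu*(x+y))*x + μv*y - μu*x) - us*(((ru - κu*(x+y))*x + μv*y - μu*x)/x))
      + K*(((rv - κv*(x+y))*y + μu*x - μv*y) - vs*(((rv - κv*(x+y))*y + μu*x - μv*y)/y))
      = (y*(x - us)*((ru - κu*(x+y))*x + μv*y - μu*x)
        + K*(x*(y - vs)*((rv - κv*(x+y))*y + μu*x - μv*y)))/(x*y) := by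
    field_simp
  constructor
  · rw [hval]
    exact div_nonpos_of_nonpos_of_nonneg hnum_le (mul_pos hx hy).le
  · intro hne
    rw [hval]
    apply div_neg_of_neg_of_pos ?_ (mul_pos hx hy)
    have hpos := hk1 hne
    rcases lt_or_ge (y*(x - us)*((ru - κu*(x+y))*x + μv*y - μu*x)
      + K*(x*(y - vs)*((rv - κv*(x+y))*y + μu*x - μv*y))) 0 with h | h
    · exact h
    · exfalso
      have hm := mul_nonneg (mul_pos hus hvs).le h
      rw [hid] at hm
      linarith

/-- Under λ_A > 0 and max(r_u − μ_u, r_v − μ_v) > 0, letting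
(u*, v*) be the positive stationary state, there is a weight K > 0 making
F^K(u,v) = F_u(u) + K F_v(v) a strict Lyapunov functional along positive
solutions of (S). -/
theorem stmt12 (ru rv κu κv μu μv : ℝ)
    (hκu : 0 < κu) (hκv : 0 < κv) (hμu : 0 < μu) (hμv : 0 < μv)
    (hlamA : 0 < (ru - μu + rv - μv +
      Real.sqrt ((ru - μu - rv + μv) ^ 2 + 4 * μu * μv)) / 2)
    (hmax : 0 < max (ru - μu) (rv - μv))
    (us vs : ℝ) (hus : 0 < us) (hvs : 0 < vs)
    (hstat1 : (ru - κu * (us + vs)) * us + μv * vs - μu * us = 0)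
    (hstat2 : (rv - κv * (us + vs)) * vs + μu * us - μv * vs = 0) :
    ∃ K : ℝ, 0 < K ∧
      ∀ u v : ℝ → ℝ,
        (∀ t : ℝ, HasDerivAt u ((ru - κu * (u t + v t)) * u t + μv * v t - μu * u t) t) →
        (∀ t : ℝ, HasDerivAt v ((rv - κv * (u t + v t)) * v t + μu * u t - μv * v t) t) →
        (∀ t : ℝ, 0 < u t) → (∀ t : ℝ, 0 < v t) →
        ∀ t : ℝ,
          deriv (fun s => (u s - us - us * Real.log (u s / us)) +
            K * (v s - vs - vs * Real.log (v s / vs))) t ≤ 0 ∧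
          ((u t, v t) ≠ (us, vs) →
            deriv (fun s => (u s - us - us * Real.log (u s / us)) +
              K * (v s - vs - vs * Real.log (v s / vs))) t < 0) := by
  -- choose the weight K
  obtain ⟨K, hK, hcase⟩ : ∃ K : ℝ, 0 < K ∧
      (us*vs*(κu + K*κv) - μv*vs - K*μu*us = 0 ∨
       (K*κv = κu ∧ 0 ≤ us*vs*(κu + K*κv) - μv*vs - K*μu*us) ∨
       (K*μu*us = μv*vs ∧ us*vs*(κu + K*κv) - μv*vs - K*μu*us ≤ 0)) := by
    rcases lt_or_ge 0 (μu - κv*vs) with hD | hD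
    · rcases le_or_gt (κu*us - μv) 0 with hN | hN
      · -- N ≤ 0, D > 0 : K = μv vs / (μu us)
        refine ⟨μv*vs/(μu*us), by positivity, Or.inr (Or.inr ⟨by field_simp; try ring, ?_⟩)⟩
        have h9 : us*vs*(κu + (μv*vs/(μu*us))*κv) - μv*vs - (μv*vs/(μu*us))*μu*us
            = vs*(κu*us - μv) - (μv*vs/(μu*us))*(us*(μu - κv*vs)) := by
          field_simp
          ring
        rw [h9]
        have ha : 0 < (μv*vs/(μu*us))*(us*(μu - κv*vs)) :=
          mul_pos (by positivity) (mul_pos hus hD)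
        nlinarith [mul_nonneg hvs.le (neg_nonneg.2 hN)]
      · -- N > 0, D > 0 : K = vs N / (us D)
        have hden : 0 < us*(μu - κv*vs) := mul_pos hus hD
        refine ⟨vs*(κu*us - μv)/(us*(μu - κv*vs)),
          div_pos (mul_pos hvs hN) hden, Or.inl ?_⟩
        have hD' : μu - vs*κv ≠ 0 := by rw [mul_comm]; exact hD.ne'
        field_simp
        ring
    · rcases le_or_gt 0 (κu*us - μv) with hN | hN
      · -- N ≥ 0, D ≤ 0 : K = κu/κv
        refine ⟨κu/κv, by positivity, Or.inr (Or.inl ⟨by field_simp, ?_⟩)⟩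
        have h9 : us*vs*(κu + (κu/κv)*κv) - μv*vs - (κu/κv)*μu*us
            = vs*(κu*us - μv) - (κu/κv)*(us*(μu - κv*vs)) := by
          field_simp
          ring
        rw [h9]
        have ha : (κu/κv)*(us*(μu - κv*vs)) ≤ 0 :=
          mul_nonpos_of_nonneg_of_nonpos (by positivity) (mul_nonpos_of_nonneg_of_nonpos hus.le hD)
        nlinarith [mul_nonneg hvs.le hN]
      · -- N < 0, D ≤ 0
        rcases eq_or_lt_of_le hD with hD0 | hD0
        · -- D = 0 : K = μv vs/(μu us), E = vs*N < 0
          refine ⟨μv*vs/(μu*us), by positivity, Or.inr (Or.inr ⟨by field_simp; try ring, ?_⟩)⟩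
          have h9 : us*vs*(κu + (μv*vs/(μu*us))*κv) - μv*vs - (μv*vs/(μu*us))*μu*us
              = vs*(κu*us - μv) - (μv*vs/(μu*us))*(us*(μu - κv*vs)) := by
            field_simp
            ring
          rw [h9, hD0]
          have hb : 0 < vs*(μv - κu*us) := mul_pos hvs (by linarith)
          nlinarith
        · -- N < 0, D < 0 : K = vs N / (us D) > 0
          have hden : us*(μu - κv*vs) < 0 := mul_neg_of_pos_of_neg hus hD0
          have hnum : vs*(κu*us - μv) < 0 := mul_neg_of_pos_of_neg hvs hN
          refine ⟨vs*(κu*us - μv)/(us*(μu - κv*vs)),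
            div_pos_of_neg_of_neg hnum hden, Or.inl ?_⟩
          have h0 : us*(μu - κv*vs) ≠ 0 := ne_of_lt hden
          have hD' : μu - vs*κv ≠ 0 := by rw [mul_comm]; exact hD0.ne
          field_simp
          ring
  refine ⟨K, hK, ?_⟩
  intro u v hu hv hupos hvpos t
  -- derivative computation
  have hlogu : HasDerivAt (fun s => Real.log (u s / us))
      (((ru - κu * (u t + v t)) * u t + μv * v t - μu * u t) / u t) t := by
    have hrw : (fun s => Real.log (u s / us)) = fun s => Real.log (u s) - Real.log us :=
      funext fun s => Real.log_div (hupos s).ne' hus.ne'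
    rw [hrw]
    exact ((hu t).log (hupos t).ne').sub_const _
  have hlogv : HasDerivAt (fun s => Real.log (v s / vs))
      (((rv - κv * (u t + v t)) * v t + μu * u t - μv * v t) / v t) t := by
    have hrw : (fun s => Real.log (v s / vs)) = fun s => Real.log (v s) - Real.log vs :=
      funext fun s => Real.log_div (hvpos s).ne' hvs.ne'
    rw [hrw]
    exact ((hv t).log (hvpos t).ne').sub_const _
  have hFu : HasDerivAt (fun s => u s - us - us * Real.log (u s / us))
      (((ru - κu * (u t + v t)) * u t + μv * v t - μu * u t)
        - us * (((ru - κu * (u t + v t)) * u t + μv * v t - μu * u t) / u t)) t :=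
    ((hu t).sub_const us).sub (hlogu.const_mul us)
  have hFv : HasDerivAt (fun s => v s - vs - vs * Real.log (v s / vs))
      (((rv - κv * (u t + v t)) * v t + μu * u t - μv * v t)
        - vs * (((rv - κv * (u t + v t)) * v t + μu * u t - μv * v t) / v t)) t :=
    ((hv t).sub_const vs).sub (hlogv.const_mul vs)
  have hF : HasDerivAt (fun s => (u s - us - us * Real.log (u s / us)) +
      K * (v s - vs - vs * Real.log (v s / vs)))
      ((((ru - κu * (u t + v t)) * u t + μv * v t - μu * u t)
        - us * (((ru - κu * (u t + v t)) * u t + μv * v t - μu * u t) / u t))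
       + K * (((rv - κv * (u t + v t)) * v t + μu * u t - μv * v t)
        - vs * (((rv - κv * (u t + v t)) * v t + μu * u t - μv * v t) / v t))) t :=
    hFu.add (hFv.const_mul K)
  rw [hF.deriv]
  obtain ⟨hle, hlt⟩ := val_bound ru rv κu κv μu μv us vs K (u t) (v t)
    hκu hκv hμu hμv hus hvs (hupos t) (hvpos t) hK hstat1 hstat2 hcase
  refine ⟨hle, fun hne => hlt ?_⟩
  intro ⟨h1, h2⟩
  exact hne (by rw [h1, h2])
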